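/- For n ≥ 3, the valued structure C_n (an n×n directed grid with specially weighted unary function μ) is a core. Concretely: let C_n have universe {1,…,n}², binary f with f((i,j),(i',j')) = ∞ if i ≤ i', j ≤ j', (i'−i)+(j'−j) = 1 and 0 otherwise, and unary μ taking values as follows with M > n²: on diagonal D_k = {(i,j) : i+j−1 = k} for k ≤ n, enumerate D_k from top-left to bottom-right as x₁,…,x_{|D_k|}; set μ-values on D₁, D₂, D₃ to (1), (M,1), (M³,M²,M⁴) respectively, on D_k for 4 ≤ k ≤ n to (M,1,…,1,M), and μ = 1 on all other elements. Then every mapping g : C_n → C_n satisfying (a) g is a homomorphism of the positive parts (g maps f-arcs to f-arcs) and (b) μ(x) ≤ μ(g(x)) for all x, is the identity; consequently C_n is a core. -/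

import Mathlib

open scoped Classical
noncomputable section

/-- The value codomain `ℚ≥0 ∪ {∞}`. -/
abbrev Val : Type := WithTop NNRat

/-- A valued structure over a signature given by a type `S` of function symbols
with arities `ar`. -/
structure VStruct (S : Type) (ar : S → ℕ) where
  U : Type
  [fintypeU : Fintype U]
  [decU : DecidableEq U]
  [nonemptyU : Nonempty U]
  val : (f : S) → (Fin (ar f) → U) → Val

attribute [instance] VStruct.fintypeU VStruct.decU VStruct.nonemptyU

variable {S : Type} [Fintype S] {ar : S → ℕ}

/-- Cost of a mapping `h` between the universes of two valued structures. -/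
def VStruct.cost (A B : VStruct S ar) (h : A.U → B.U) : Val :=
  ∑ f : S, ∑ x : Fin (ar f) → A.U, A.val f x * B.val f (h ∘ x)

/-- `opt(A,B)`: the minimum cost over all mappings. -/
def VStruct.opt (A B : VStruct S ar) : Val :=
  Finset.univ.inf' Finset.univ_nonempty (A.cost B)

/-- `f^A(g⁻¹(x))`: sum of `f^A` over the `g`-preimage of the tuple `x`. -/
def VStruct.preSum (A B : VStruct S ar) (g : A.U → B.U) (f : S)
    (x : Fin (ar f) → B.U) : Val :=
  ∑ y ∈ Finset.univ.filter (fun y : Fin (ar f) → A.U => g ∘ y = x), A.val f y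

/-- Inverse fractional homomorphism from `A` to `B`. -/
def IsIFH (A B : VStruct S ar) (ω : (A.U → B.U) → NNRat) : Prop :=
  (∑ g : A.U → B.U, ω g) = 1 ∧
  ∀ (f : S) (x : Fin (ar f) → B.U),
    (∑ g : A.U → B.U, (ω g : Val) * A.preSum B g f x) ≤ B.val f x

/-- `A ≼ B`: `A` improves `B`. -/
def Improves (A B : VStruct S ar) : Prop :=
  ∀ C : VStruct S ar, A.opt C ≤ B.opt C

/-- Valued equivalence. -/
def VEquiv (A B : VStruct S ar) : Prop :=
  ∀ C : VStruct S ar, A.opt C = B.opt C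

/-- A valued structure is a core if every inverse fractional homomorphism from
it to itself has only surjective mappings in its support. -/
def IsCore (A : VStruct S ar) : Prop :=
  ∀ ω : (A.U → A.U) → NNRat, IsIFH A A ω →
    ∀ g : A.U → A.U, 0 < ω g → Function.Surjective g

/-- Signature with a binary symbol `f` and a unary symbol `mu`. -/
inductive GSym where
  | f | mu
deriving DecidableEq

instance instFintypeGSym : Fintype GSym where
  elems := {GSym.f, GSym.mu}
  complete := fun x => by cases x <;> simp

/-- Arities. -/
def gAr : GSym → ℕ
  | .f => 2
  | .mu => 1

/-- Arc of the directed `n × n` grid (0-based `Fin` coordinates). -/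
def arcF {n : ℕ} (a b : Fin n × Fin n) : Prop :=
  (b.1.val = a.1.val + 1 ∧ b.2 = a.2) ∨ (b.1 = a.1 ∧ b.2.val = a.2.val + 1)

/-- The weight `μ^{C_n}` at the (1-based) grid position `(i,j)`:
on diagonal `D_k` (`k = i + j - 1 ≤ n`), enumerated top-left to bottom-right
(positions indexed by `j`), the values are `(1)`, `(M,1)`, `(M³,M²,M⁴)`,
and `(M,1,…,1,M)` for `4 ≤ k ≤ n`; all remaining elements get `1`. -/
def muC (n M i j : ℕ) : ℕ :=
  if n < i + j - 1 then 1
  else if i + j - 1 = 1 then 1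
  else if i + j - 1 = 2 then (if j = 1 then M else 1)
  else if i + j - 1 = 3 then
    (if j = 1 then M ^ 3 else if j = 2 then M ^ 2 else M ^ 4)
  else if j = 1 ∨ j = i + j - 1 then M else 1

/-- Values of the structure `C_n`. -/
def gridCval (n M : ℕ) : (s : GSym) → (Fin (gAr s) → Fin n × Fin n) → Val
  | .f => fun x => if arcF (x ⟨0, by decide⟩) (x ⟨1, by decide⟩) then ⊤ else 0
  | .mu => fun x =>
      ((muC n M ((x ⟨0, by decide⟩).1.val + 1) ((x ⟨0, by decide⟩).2.val + 1)
        : NNRat) : Val)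

/-- The valued structure `C_n` (with parameter `M`). -/
def gridC (n M : ℕ) (hn : 0 < n) : VStruct GSym gAr where
  U := Fin n × Fin n
  nonemptyU := ⟨(⟨0, hn⟩, ⟨0, hn⟩)⟩
  val := gridCval n M


section Part1

variable {n M : ℕ}

lemma eqPt {x y : Fin n × Fin n} (h1 : x.1.val = y.1.val) (h2 : x.2.val = y.2.val) :
    x = y := Prod.ext (Fin.ext h1) (Fin.ext h2)

lemma arc_succ {a y : Fin n × Fin n} (h : arcF a y) :
    (y.1.val = a.1.val + 1 ∧ y.2.val = a.2.val) ∨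
    (y.1.val = a.1.val ∧ y.2.val = a.2.val + 1) := by
  rcases h with ⟨h1, h2⟩ | ⟨h1, h2⟩
  · exact Or.inl ⟨h1, congrArg Fin.val h2⟩
  · exact Or.inr ⟨congrArg Fin.val h1, h2⟩

lemma arc_sum {a b : Fin n × Fin n} (h : arcF a b) :
    b.1.val + b.2.val = a.1.val + a.2.val + 1 := by
  rcases arc_succ h with ⟨h1, h2⟩ | ⟨h1, h2⟩ <;> omega

lemma exists_pred {x : Fin n × Fin n} (hx : 0 < x.1.val + x.2.val) :
    ∃ p : Fin n × Fin n, arcF p x ∧ p.1.val + p.2.val + 1 = x.1.val + x.2.val := by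
  rcases Nat.eq_zero_or_pos x.1.val with h0 | h0
  · have h2 : 0 < x.2.val := by omega
    refine ⟨(x.1, ⟨x.2.val - 1, by have := x.2.isLt; omega⟩), Or.inr ⟨rfl, ?_⟩, ?_⟩
    · show x.2.val = x.2.val - 1 + 1; omega
    · show x.1.val + (x.2.val - 1) + 1 = _; omega
  · refine ⟨(⟨x.1.val - 1, by have := x.1.isLt; omega⟩, x.2), Or.inl ⟨?_, rfl⟩, ?_⟩
    · show x.1.val = x.1.val - 1 + 1; omega
    · show x.1.val - 1 + x.2.val + 1 = _; omega

/-- An arc-preserving map preserves diagonals. -/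
lemma sum_g (hn : 0 < n) {g : Fin n × Fin n → Fin n × Fin n}
    (ha : ∀ a b, arcF a b → arcF (g a) (g b)) :
    ∀ x : Fin n × Fin n, (g x).1.val + (g x).2.val = x.1.val + x.2.val := by
  set z0 : Fin n × Fin n := (⟨0, hn⟩, ⟨0, hn⟩) with hz0
  have key : ∀ k (x : Fin n × Fin n), x.1.val + x.2.val = k →
      (g x).1.val + (g x).2.val = (g z0).1.val + (g z0).2.val + k := by
    intro k
    induction k with
    | zero =>
      intro x hx
      have hz1 : z0.1.val = 0 := rfl
      have hz2 : z0.2.val = 0 := rfl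
      have hxz : x = z0 := eqPt (by omega) (by omega)
      rw [hxz]; omega
    | succ k IH =>
      intro x hx
      obtain ⟨p, hp, hps⟩ := exists_pred (x := x) (by omega)
      have h1 := IH p (by omega)
      have h2 := arc_sum (ha p x hp)
      omega
  have hcorner : (g z0).1.val + (g z0).2.val = 0 := by
    have h1 := key (2 * n - 2) (⟨n - 1, by omega⟩, ⟨n - 1, by omega⟩) (by show n - 1 + (n - 1) = _; omega)
    have h2 : ((g (⟨n - 1, by omega⟩, ⟨n - 1, by omega⟩) : Fin n × Fin n)).1.val < n := Fin.isLt _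
    have h3 : ((g (⟨n - 1, by omega⟩, ⟨n - 1, by omega⟩) : Fin n × Fin n)).2.val < n := Fin.isLt _
    omega
  intro x
  have := key (x.1.val + x.2.val) x rfl
  omega

lemma muC_11 (hn : 1 ≤ n) : muC n M 1 1 = 1 := by
  unfold muC; split_ifs <;> first | rfl | (exfalso; omega)

lemma muC_21 (hn : 2 ≤ n) : muC n M 2 1 = M := by
  unfold muC; split_ifs <;> first | rfl | (exfalso; omega)

lemma muC_12 (hn : 2 ≤ n) : muC n M 1 2 = 1 := by
  unfold muC; split_ifs <;> first | rfl | (exfalso; omega)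

lemma muC_13 (hn : 3 ≤ n) : muC n M 1 3 = M ^ 4 := by
  unfold muC; split_ifs <;> first | rfl | (exfalso; omega)

lemma muC_22 (hn : 3 ≤ n) : muC n M 2 2 = M ^ 2 := by
  unfold muC; split_ifs <;> first | rfl | (exfalso; omega)

lemma muC_31 (hn : 3 ≤ n) : muC n M 3 1 = M ^ 3 := by
  unfold muC; split_ifs <;> first | rfl | (exfalso; omega)

lemma muC_left {k : ℕ} (h4 : 4 ≤ k) (hk : k ≤ n) : muC n M k 1 = M := by
  unfold muC; split_ifs <;> first | rfl | (exfalso; omega)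

lemma muC_top {k : ℕ} (h4 : 4 ≤ k) (hk : k ≤ n) : muC n M 1 k = M := by
  unfold muC; split_ifs <;> first | rfl | (exfalso; omega)

lemma muC_mid {i j : ℕ} (h4 : 4 ≤ i + j - 1) (hk : i + j - 1 ≤ n)
    (hj1 : 2 ≤ j) (hj2 : j < i + j - 1) : muC n M i j = 1 := by
  unfold muC; split_ifs <;> first | rfl | (exfalso; omega)

/-- Part 1: rigidity. -/
lemma rigid (hn : 3 ≤ n) (hM : n ^ 2 < M)
    (g : Fin n × Fin n → Fin n × Fin n)
    (ha : ∀ a b : Fin n × Fin n, arcF a b → arcF (g a) (g b))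
    (hb : ∀ x : Fin n × Fin n,
        muC n M (x.1.val + 1) (x.2.val + 1) ≤
          muC n M ((g x).1.val + 1) ((g x).2.val + 1)) :
    g = id := by
  have hM2 : 2 ≤ M := by nlinarith
  have hs := sum_g (by omega) ha
  have main : ∀ k, ∀ x : Fin n × Fin n, x.1.val + x.2.val = k → g x = x := by
    intro k
    induction k using Nat.strong_induction_on with
    | _ k IH =>
    intro x hx
    have hgs : (g x).1.val + (g x).2.val = k := by rw [hs x, hx]
    match k, hx with
    | 0, hx =>
      exact eqPt (by omega) (by omega)
    | 1, hx =>
      -- x is (1,0) or (0,1)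
      rcases Nat.eq_zero_or_pos x.1.val with h0 | h0
      · -- x = (0,1)
        have hx1 : x.1.val = 0 := h0
        have hx2 : x.2.val = 1 := by omega
        -- suppose g x = (1,0); then look at z = (0,2)
        by_contra hne
        have hgx : (g x).1.val = 1 ∧ (g x).2.val = 0 := by
          rcases Nat.eq_zero_or_pos (g x).1.val with h1 | h1
          · exact absurd (eqPt (by omega) (by omega)) hne
          · omega
        set z : Fin n × Fin n := (⟨0, by omega⟩, ⟨2, by omega⟩) with hz
        have harc : arcF x z := Or.inr ⟨Fin.ext (by simpa using hx1.symm), by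
          show (2 : ℕ) = x.2.val + 1; omega⟩
        have harc2 := arc_succ (ha x z harc)
        have hbz := hb z
        have hz1 : z.1.val = 0 := rfl
        have hz2 : z.2.val = 2 := rfl
        rw [hz1, hz2] at hbz
        rw [muC_13 hn] at hbz
        -- g z is (2,0) or (1,1)
        rcases harc2 with ⟨ha1, ha2⟩ | ⟨ha1, ha2⟩
        · have e1 : (g z).1.val = 2 := by omega
          have e2 : (g z).2.val = 0 := by omega
          rw [e1, e2] at hbz
          rw [show (2:ℕ)+1 = 3 from rfl, show (0:ℕ)+1 = 1 from rfl, muC_31 hn] at hbz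
          have : M ^ 4 > M ^ 3 := Nat.pow_lt_pow_right (by omega) (by omega)
          omega
        · have e1 : (g z).1.val = 1 := by omega
          have e2 : (g z).2.val = 1 := by omega
          rw [e1, e2] at hbz
          rw [show (1:ℕ)+1 = 2 from rfl, muC_22 hn] at hbz
          have : M ^ 4 > M ^ 2 := Nat.pow_lt_pow_right (by omega) (by omega)
          omega
      · -- x = (1,0)
        have hx1 : x.1.val = 1 := by omega
        have hx2 : x.2.val = 0 := by omega
        have hbx := hb x
        rw [hx1, hx2, show (1:ℕ)+1 = 2 from rfl, show (0:ℕ)+1 = 1 from rfl, muC_21 (by omega)] at hbx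
        rcases Nat.eq_zero_or_pos (g x).1.val with h1 | h1
        · exfalso
          have e1 : (g x).2.val = 1 := by omega
          rw [h1, e1, show (0:ℕ)+1 = 1 from rfl, show (1:ℕ)+1 = 2 from rfl, muC_12 (by omega)] at hbx
          omega
        · exact eqPt (by omega) (by omega)
    | (k + 2), hx =>
      -- general: interior points via two predecessors; endpoints via mu
      rcases Nat.eq_zero_or_pos x.1.val with h0 | h0
      · -- x = (0, k+2): endpoint
        have hx2 : x.2.val = k + 2 := by omega
        have hkn : k + 2 ≤ n - 1 := by have := x.2.isLt; omega
        -- predecessor p = (0, k+1), fixed by IH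
        set p : Fin n × Fin n := (⟨0, by omega⟩, ⟨k + 1, by omega⟩) with hp
        have harc : arcF p x := Or.inr ⟨Fin.ext (by simpa using h0), by
          show x.2.val = k + 1 + 1; omega⟩
        have hfix : g p = p := IH (k + 1) (by omega) p (by show 0 + (k+1) = _; omega)
        have harc2 := arc_succ (ha p x harc)
        rw [hfix] at harc2
        have hp1 : p.1.val = 0 := rfl
        have hp2 : p.2.val = k + 1 := rfl
        rw [hp1, hp2] at harc2
        -- g x is (0, k+2) or (1, k+1)
        rcases harc2 with ⟨ha1, ha2⟩ | ⟨ha1, ha2⟩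
        · -- g x = (1, k+1): contradiction via mu
          exfalso
          have hbx := hb x
          rw [h0, hx2, ha1, ha2] at hbx
          simp only [show (0:ℕ)+1 = 1 from rfl, show k+2+1 = k+3 from rfl,
            show (1:ℕ)+1 = 2 from rfl, show k+1+1 = k+2 from rfl] at hbx
          rcases Nat.eq_zero_or_pos k with hk0 | hk0
          · subst hk0
            rw [show (0:ℕ)+3 = 3 from rfl, show (0:ℕ)+2 = 2 from rfl, muC_13 hn, muC_22 hn] at hbx
            have : M ^ 2 < M ^ 4 := Nat.pow_lt_pow_right (by omega) (by omega)
            omega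
          · rw [muC_top (k := k + 3) (by omega) (by omega)] at hbx
            rw [muC_mid (i := 2) (j := k + 2) (by omega) (by omega) (by omega) (by omega)] at hbx
            omega
        · exact eqPt (by omega) (by omega)
      rcases Nat.eq_zero_or_pos x.2.val with h0' | h0'
      · -- x = (k+2, 0): endpoint
        have hx1 : x.1.val = k + 2 := by omega
        set p : Fin n × Fin n := (⟨k + 1, by have := x.1.isLt; omega⟩, ⟨0, by omega⟩) with hp
        have harc : arcF p x := Or.inl ⟨by show x.1.val = k + 1 + 1; omega,
          Fin.ext (by simpa using h0')⟩
        have hfix : g p = p := IH (k + 1) (by omega) p (by show (k+1) + 0 = _; omega)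
        have harc2 := arc_succ (ha p x harc)
        rw [hfix] at harc2
        have hp1 : p.1.val = k + 1 := rfl
        have hp2 : p.2.val = 0 := rfl
        rw [hp1, hp2] at harc2
        rcases harc2 with ⟨ha1, ha2⟩ | ⟨ha1, ha2⟩
        · exact eqPt (by omega) (by omega)
        · -- g x = (k+1, 1): contradiction via mu
          exfalso
          have hkn : k + 2 ≤ n - 1 := by have := x.1.isLt; omega
          have hbx := hb x
          rw [hx1, h0', ha1, ha2] at hbx
          simp only [show (0:ℕ)+1 = 1 from rfl, show k+2+1 = k+3 from rfl,
            show (1:ℕ)+1 = 2 from rfl, show k+1+1 = k+2 from rfl] at hbx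
          rcases Nat.eq_zero_or_pos k with hk0 | hk0
          · subst hk0
            rw [show (0:ℕ)+3 = 3 from rfl, show (0:ℕ)+2 = 2 from rfl, muC_31 hn, muC_22 hn] at hbx
            have : M ^ 2 < M ^ 3 := Nat.pow_lt_pow_right (by omega) (by omega)
            omega
          · rw [muC_left (k := k + 3) (by omega) (by omega)] at hbx
            rw [muC_mid (i := k + 2) (j := 2) (by omega) (by omega) (by omega) (by omega)] at hbx
            omega
      · -- interior: two predecessors
        rcases Nat.lt_or_ge (x.1.val + x.2.val) 3 with hk3 | hk3
        · -- k = 2 diagonal, x = (1,1)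
          have hx1 : x.1.val = 1 := by omega
          have hx2 : x.2.val = 1 := by omega
          set p1 : Fin n × Fin n := (⟨0, by omega⟩, ⟨1, by omega⟩) with hP1
          set p2 : Fin n × Fin n := (⟨1, by omega⟩, ⟨0, by omega⟩) with hP2
          have harc1 : arcF p1 x := Or.inl ⟨by show x.1.val = 0 + 1; omega,
            Fin.ext (by show x.2.val = 1; omega)⟩
          have harc2 : arcF p2 x := Or.inr ⟨Fin.ext (by show x.1.val = 1; omega),
            by show x.2.val = 0 + 1; omega⟩
          have hf1 : g p1 = p1 := IH 1 (by omega) p1 rfl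
          have hf2 : g p2 = p2 := IH 1 (by omega) p2 rfl
          have hs1 := arc_succ (ha p1 x harc1); rw [hf1] at hs1
          have hs2 := arc_succ (ha p2 x harc2); rw [hf2] at hs2
          have e1 : p1.1.val = 0 := rfl
          have e2 : p1.2.val = 1 := rfl
          have e3 : p2.1.val = 1 := rfl
          have e4 : p2.2.val = 0 := rfl
          rw [e1, e2] at hs1; rw [e3, e4] at hs2
          exact eqPt (by omega) (by omega)
        · -- general interior
          set p1 : Fin n × Fin n := (⟨x.1.val - 1, by have := x.1.isLt; omega⟩, x.2) with hP1
          set p2 : Fin n × Fin n := (x.1, ⟨x.2.val - 1, by have := x.2.isLt; omega⟩) with hP2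
          have harc1 : arcF p1 x := Or.inl ⟨by show x.1.val = x.1.val - 1 + 1; omega, rfl⟩
          have harc2 : arcF p2 x := Or.inr ⟨rfl, by show x.2.val = x.2.val - 1 + 1; omega⟩
          have hf1 : g p1 = p1 := IH (k + 1) (by omega) p1 (by show x.1.val - 1 + x.2.val = _; omega)
          have hf2 : g p2 = p2 := IH (k + 1) (by omega) p2 (by show x.1.val + (x.2.val - 1) = _; omega)
          have hs1 := arc_succ (ha p1 x harc1); rw [hf1] at hs1
          have hs2 := arc_succ (ha p2 x harc2); rw [hf2] at hs2
          have e1 : p1.1.val = x.1.val - 1 := rfl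
          have e2 : p1.2.val = x.2.val := rfl
          have e3 : p2.1.val = x.1.val := rfl
          have e4 : p2.2.val = x.2.val - 1 := rfl
          rw [e1, e2] at hs1; rw [e3, e4] at hs2
          exact eqPt (by omega) (by omega)
  funext x
  exact main (x.1.val + x.2.val) x rfl

end Part1


section Part2

lemma muC_pow (n M i j : ℕ) : ∃ e ≤ 4, muC n M i j = M ^ e := by
  unfold muC
  split_ifs <;>
    first
      | exact ⟨0, by omega, (pow_zero M).symm⟩
      | exact ⟨1, by omega, (pow_one M).symm⟩
      | exact ⟨2, by omega, rfl⟩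
      | exact ⟨3, by omega, rfl⟩
      | exact ⟨4, by omega, rfl⟩

lemma muC_pos {n M i j : ℕ} (hM : 0 < M) : 0 < muC n M i j := by
  obtain ⟨e, -, he⟩ := muC_pow n M i j
  rw [he]; exact pow_pos hM e

lemma ratio_ge {M a b : ℕ} (hM2 : 2 ≤ M)
    (ha : ∃ e ≤ 4, a = M ^ e) (hb : ∃ e ≤ 4, b = M ^ e) (hab : b < a) :
    (M : NNRat) ≤ ((b : ℕ) : NNRat)⁻¹ * ((a : ℕ) : NNRat) := by
  obtain ⟨e, -, rfl⟩ := ha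
  obtain ⟨d, -, rfl⟩ := hb
  have hde : d < e := by
    by_contra h
    exact absurd (Nat.pow_le_pow_right (by omega) (by omega) : M ^ e ≤ M ^ d) (by omega)
  have hM0 : (M : NNRat) ≠ 0 := Nat.cast_ne_zero.2 (by omega)
  push_cast
  have key : (M : NNRat) ^ e = M ^ (e - d) * M ^ d := by
    rw [← pow_add]; congr 1; omega
  rw [key, mul_comm ((M : NNRat) ^ (e - d)) _, ← mul_assoc,
    inv_mul_cancel₀ (pow_ne_zero d hM0), one_mul]
  exact le_self_pow₀ (by exact_mod_cast Nat.one_le_cast.2 (by omega)) (by omega)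

lemma valCoe_sum {α : Type*} (s : Finset α) (f : α → NNRat) :
    ((∑ a ∈ s, f a : NNRat) : Val) = ∑ a ∈ s, ((f a : NNRat) : Val) := by
  classical
  induction s using Finset.cons_induction with
  | empty => simp
  | cons a s ha ih => rw [Finset.sum_cons, Finset.sum_cons, WithTop.coe_add, ih]

end Part2

set_option maxHeartbeats 1000000 in
lemma gridC_isCore (n M : ℕ) (hn : 3 ≤ n) (hM : n ^ 2 < M) (h0n : 0 < n) :
    IsCore (gridC n M h0n) := by
  have hM2 : 2 ≤ M := by nlinarith
  set A : VStruct GSym gAr := gridC n M h0n with hA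
  intro ω hw g hg
  let pair : (Fin n × Fin n) → (Fin n × Fin n) → (Fin (gAr GSym.f) → A.U) :=
    fun u v i => if i.val = 0 then u else v
  have hvalf : ∀ u v, A.val GSym.f (pair u v) = if arcF u v then ⊤ else 0 := fun u v => rfl
  -- Step 1 : every map in the support preserves arcs
  have step1 : ∀ g' : A.U → A.U, 0 < ω g' →
      ∀ a b : Fin n × Fin n, arcF a b → arcF (g' a) (g' b) := by
    intro g' hg' a b hab
    by_contra hnab
    have h2 := hw.2 GSym.f (pair (g' a) (g' b))
    rw [hvalf (g' a) (g' b), if_neg hnab] at h2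
    have hzero : ∀ g'' ∈ Finset.univ,
        (ω g'' : Val) * VStruct.preSum A A g'' GSym.f (pair (g' a) (g' b)) = 0 :=
      Finset.sum_eq_zero_iff.1 (le_antisymm h2 zero_le)
    have hterm := hzero g' (Finset.mem_univ _)
    have hmem : pair a b ∈ Finset.univ.filter
        (fun y : Fin (gAr GSym.f) → A.U => g' ∘ y = pair (g' a) (g' b)) := by
      refine Finset.mem_filter.2 ⟨Finset.mem_univ _, ?_⟩
      funext i
      by_cases hi : i.val = 0 <;> simp [pair, Function.comp, hi]
    have hle : VStruct.preSum A A g' GSym.f (pair (g' a) (g' b)) = ⊤ := by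
      have hsp := Finset.add_sum_erase
        (Finset.univ.filter (fun y : Fin (gAr GSym.f) → A.U => g' ∘ y = pair (g' a) (g' b)))
        (fun y => A.val GSym.f y) hmem
      rw [VStruct.preSum, ← hsp]
      show A.val GSym.f (pair a b) + _ = ⊤
      rw [hvalf a b, if_pos hab, top_add]
    rw [hle, WithTop.mul_top (by exact_mod_cast hg'.ne')] at hterm
    exact absurd hterm (by simp)
  -- Step 2 : weighted sum over the unary symbol
  let m : A.U → NNRat := fun u => ((muC n M (u.1.val + 1) (u.2.val + 1) : ℕ) : NNRat)
  have hm0 : ∀ u, m u ≠ 0 := by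
    intro u
    show ((muC n M (u.1.val + 1) (u.2.val + 1) : ℕ) : NNRat) ≠ 0
    have := muC_pos (n := n) (M := M) (i := u.1.val + 1) (j := u.2.val + 1) (by omega)
    exact_mod_cast this.ne'
  let i0 : Fin (gAr GSym.mu) := ⟨0, by decide⟩
  have hvalmu : ∀ x : Fin (gAr GSym.mu) → A.U, A.val GSym.mu x = ((m (x i0) : NNRat) : Val) :=
    fun x => rfl
  let T : (A.U → A.U) → Val :=
    fun g' => ∑ y : Fin (gAr GSym.mu) → A.U, (((m (g' (y i0)))⁻¹ * m (y i0) : NNRat) : Val)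
  let N' : NNRat := ((n ^ 2 : ℕ) : NNRat)
  have hcard : Fintype.card (Fin (gAr GSym.mu) → A.U) = n ^ 2 := by
    rw [Fintype.card_fun]
    have h1 : Fintype.card (Fin (gAr GSym.mu)) = 1 := by
      rw [Fintype.card_fin]; rfl
    have h2 : Fintype.card A.U = n * n := by
      show Fintype.card (Fin n × Fin n) = n * n
      simp [Fintype.card_prod]
    rw [h1, h2, pow_one, pow_two]
  have hone : ∀ x : Fin (gAr GSym.mu) → A.U,
      (((m (x i0))⁻¹ : NNRat) : Val) * A.val GSym.mu x = 1 := by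
    intro x
    rw [hvalmu x, ← WithTop.coe_mul, inv_mul_cancel₀ (hm0 _)]
    rfl
  have hconst : ∑ _x : Fin (gAr GSym.mu) → A.U, (1 : Val) = ((N' : NNRat) : Val) := by
    rw [Finset.sum_const, Finset.card_univ, hcard, nsmul_eq_mul, mul_one]
    exact (WithTop.coe_natCast _).symm
  have key : (∑ g' : A.U → A.U, (ω g' : Val) * T g') ≤ ((N' : NNRat) : Val) := by
    have h2 : ∑ x : Fin (gAr GSym.mu) → A.U,
          (((m (x i0))⁻¹ : NNRat) : Val) *
            (∑ g' : A.U → A.U, (ω g' : Val) * VStruct.preSum A A g' GSym.mu x)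
        ≤ ∑ x : Fin (gAr GSym.mu) → A.U,
            (((m (x i0))⁻¹ : NNRat) : Val) * A.val GSym.mu x :=
      Finset.sum_le_sum fun x _ => mul_le_mul_right (hw.2 GSym.mu x) _
    have hrhs : ∑ x : Fin (gAr GSym.mu) → A.U,
        (((m (x i0))⁻¹ : NNRat) : Val) * A.val GSym.mu x = ((N' : NNRat) : Val) := by
      rw [Finset.sum_congr rfl fun x _ => hone x, hconst]
    have hlhs : ∑ x : Fin (gAr GSym.mu) → A.U,
          (((m (x i0))⁻¹ : NNRat) : Val) *
            (∑ g' : A.U → A.U, (ω g' : Val) * VStruct.preSum A A g' GSym.mu x)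
        = ∑ g' : A.U → A.U, (ω g' : Val) * T g' := by
      rw [Finset.sum_congr rfl fun x _ => Finset.mul_sum _ _ _]
      rw [Finset.sum_comm]
      refine Finset.sum_congr rfl fun g' _ => ?_
      have inner : ∀ x : Fin (gAr GSym.mu) → A.U,
          (((m (x i0))⁻¹ : NNRat) : Val) * ((ω g' : Val) * VStruct.preSum A A g' GSym.mu x)
          = (ω g' : Val) * ((((m (x i0))⁻¹ : NNRat) : Val) * VStruct.preSum A A g' GSym.mu x) :=
        fun x => mul_left_comm _ _ _
      rw [Finset.sum_congr rfl fun x _ => inner x, ← Finset.mul_sum]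
      congr 1
      have expand : ∀ x : Fin (gAr GSym.mu) → A.U,
          (((m (x i0))⁻¹ : NNRat) : Val) * VStruct.preSum A A g' GSym.mu x
          = ∑ y ∈ Finset.univ.filter
              (fun y : Fin (gAr GSym.mu) → A.U => g' ∘ y = x),
              (((m (g' (y i0)))⁻¹ * m (y i0) : NNRat) : Val) := by
        intro x
        rw [VStruct.preSum, Finset.mul_sum]
        refine Finset.sum_congr rfl fun y hy => ?_
        have hyx : g' ∘ y = x := (Finset.mem_filter.1 hy).2
        have hx0 : x i0 = g' (y i0) := by rw [← hyx]; rfl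
        rw [hvalmu y, hx0, ← WithTop.coe_mul]
      rw [Finset.sum_congr rfl fun x _ => expand x]
      exact Finset.sum_fiberwise _ _ _
    rw [hlhs, hrhs] at h2
    exact h2
  -- T id = N'
  have hTid : T id = ((N' : NNRat) : Val) := by
    have hterm1 : ∀ y : Fin (gAr GSym.mu) → A.U,
        (((m (id (y i0)))⁻¹ * m (y i0) : NNRat) : Val) = 1 := by
      intro y
      rw [id_eq, inv_mul_cancel₀ (hm0 _)]
      rfl
    rw [show T id = ∑ y : Fin (gAr GSym.mu) → A.U,
        (((m (id (y i0)))⁻¹ * m (y i0) : NNRat) : Val) from rfl]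
    rw [Finset.sum_congr rfl fun y _ => hterm1 y, hconst]
  -- T g' > N' for non-identity support maps
  have hTgt : ∀ g' : A.U → A.U, 0 < ω g' → g' ≠ id → ((N' : NNRat) : Val) < T g' := by
    intro g' hg' hne
    have harc := step1 g' hg'
    have hnb : ¬ ∀ x : Fin n × Fin n,
        muC n M (x.1.val + 1) (x.2.val + 1) ≤
          muC n M ((g' x).1.val + 1) ((g' x).2.val + 1) :=
      fun hb => hne (rigid hn hM g' harc hb)
    push_neg at hnb
    obtain ⟨u, hu⟩ := hnb
    have hterm : ((M : ℕ) : NNRat) ≤ (m (g' u))⁻¹ * m u :=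
      ratio_ge hM2 (muC_pow n M (u.1.val + 1) (u.2.val + 1))
        (muC_pow n M ((g' u).1.val + 1) ((g' u).2.val + 1)) hu
    have hsingle : (((m (g' u))⁻¹ * m u : NNRat) : Val) ≤ T g' := by
      have hsp := Finset.add_sum_erase Finset.univ
        (fun y : Fin (gAr GSym.mu) → A.U => (((m (g' (y i0)))⁻¹ * m (y i0) : NNRat) : Val))
        (Finset.mem_univ (fun _ => u))
      calc (((m (g' u))⁻¹ * m u : NNRat) : Val)
          ≤ (((m (g' u))⁻¹ * m u : NNRat) : Val) + ∑ y ∈ Finset.univ.erase (fun _ => u),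
              (((m (g' (y i0)))⁻¹ * m (y i0) : NNRat) : Val) := self_le_add_right _ _
        _ = T g' := hsp
    have hNM : (N' : NNRat) < ((M : ℕ) : NNRat) := by
      exact_mod_cast Nat.cast_lt.2 hM
    calc ((N' : NNRat) : Val) < (((M : ℕ) : NNRat) : Val) := WithTop.coe_lt_coe.2 hNM
      _ ≤ (((m (g' u))⁻¹ * m u : NNRat) : Val) := WithTop.coe_le_coe.2 hterm
      _ ≤ T g' := hsingle
  -- conclude
  by_cases hgid : g = id
  · rw [hgid]; exact Function.surjective_id
  exfalso
  have hTg := hTgt g hg hgid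
  have hsplit := Finset.add_sum_erase Finset.univ
    (fun g' : A.U → A.U => (ω g' : Val) * T g') (Finset.mem_univ g)
  have hrest : ∑ g' ∈ Finset.univ.erase g, ((ω g' * N' : NNRat) : Val)
      ≤ ∑ g' ∈ Finset.univ.erase g, (ω g' : Val) * T g' := by
    refine Finset.sum_le_sum fun g' _ => ?_
    rcases eq_or_lt_of_le (zero_le : 0 ≤ ω g') with h0 | h0
    · rw [← h0]; simp
    · rw [WithTop.coe_mul]
      refine mul_le_mul_right ?_ _
      by_cases h : g' = id
      · rw [h, hTid]
      · exact (hTgt g' h0 h).le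
  have hmain : (ω g : Val) * T g +
      ((∑ g' ∈ Finset.univ.erase g, ω g' * N' : NNRat) : Val) ≤ ((N' : NNRat) : Val) := by
    rw [valCoe_sum]
    calc (ω g : Val) * T g + ∑ g' ∈ Finset.univ.erase g, ((ω g' * N' : NNRat) : Val)
        ≤ (ω g : Val) * T g + ∑ g' ∈ Finset.univ.erase g, (ω g' : Val) * T g' :=
          add_le_add_right hrest _
      _ = ∑ g' : A.U → A.U, (ω g' : Val) * T g' := hsplit
      _ ≤ ((N' : NNRat) : Val) := key
  rcases eq_or_ne (T g) ⊤ with hT | hT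
  · rw [hT, WithTop.mul_top (by exact_mod_cast hg.ne')] at hmain
    rw [top_add] at hmain
    exact absurd (top_le_iff.1 hmain) WithTop.coe_ne_top
  obtain ⟨t, hT'⟩ := WithTop.ne_top_iff_exists.1 hT
  rw [← hT'] at hTg hmain
  have htN : N' < t := WithTop.coe_lt_coe.1 hTg
  rw [← WithTop.coe_mul, ← WithTop.coe_add] at hmain
  have hmain' : ω g * t + (∑ g' ∈ Finset.univ.erase g, ω g' * N') ≤ N' :=
    WithTop.coe_le_coe.1 hmain
  have hsum1 : ω g + ∑ g' ∈ Finset.univ.erase g, ω g' = 1 := by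
    rw [Finset.add_sum_erase _ _ (Finset.mem_univ g)]
    exact hw.1
  rw [← Finset.sum_mul] at hmain'
  have hlt : ω g * N' < ω g * t := mul_lt_mul_of_pos_left htN hg
  have hcontra : N' < N' := by
    calc N' = (ω g + ∑ g' ∈ Finset.univ.erase g, ω g') * N' := by rw [hsum1, one_mul]
      _ = ω g * N' + (∑ g' ∈ Finset.univ.erase g, ω g') * N' := add_mul _ _ _
      _ < ω g * t + (∑ g' ∈ Finset.univ.erase g, ω g') * N' := add_lt_add_left hlt _
      _ ≤ N' := hmain'
  exact absurd hcontra (lt_irrefl N')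

/-- For `n ≥ 3` and `M > n²`: every self-map of `C_n` that preserves arcs and
does not decrease `μ` is the identity; consequently `C_n` is a core. -/
theorem stmt19 (n M : ℕ) (hn : 3 ≤ n) (hM : n ^ 2 < M) :
    (∀ g : Fin n × Fin n → Fin n × Fin n,
      (∀ a b : Fin n × Fin n, arcF a b → arcF (g a) (g b)) →
      (∀ x : Fin n × Fin n,
        muC n M (x.1.val + 1) (x.2.val + 1) ≤
          muC n M ((g x).1.val + 1) ((g x).2.val + 1)) →
      g = id) ∧
    IsCore (gridC n M (by omega)) :=
  ⟨fun g ha hb => rigid hn hM g ha hb, gridC_isCore n M hn hM _⟩
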